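/- Under the hypotheses of the previous statement, for (H,Φ) ∈ 𝒳(G) the primitive idempotent e^G_{(H,Φ)} of B^A_𝕂(G) is given by e^G_{(H,Φ)} = (1/(|N_G(H,Φ)|·|H*|)) ∑_{K ≤ H, Φ|_{K^⊥}=1} ∑_{φ ∈ H*} |K|·μ(K,H)·Φ(φ⁻¹)·[K, φ|_K]_G, where μ is the Möbius function of the subgroup lattice of H, K^⊥ = {φ ∈ H* : φ|_K = 1}, and N_G(H,Φ) is the stabilizer of (H,Φ) under G-conjugation. -/

import Mathlib

open scoped Classical

section FiberedBurnside

variable {A : Type*} [CommGroup A]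

/-- Conjugation action on pairs `(U, φ)` with `U ≤ G` and `φ : U →* A`:
`ᵍ(U,φ) = (ᵍU, ᵍφ)`. -/
def pairConj {G : Type*} [Group G] (g : G) (p : Σ U : Subgroup G, (↥U →* A)) :
    Σ U : Subgroup G, (↥U →* A) :=
  ⟨p.1.map ((MulAut.conj g : G ≃* G) : G →* G),
    p.2.comp ((MulEquiv.subgroupMap (MulAut.conj g : G ≃* G) p.1).symm.toMonoidHom)⟩

/-- `R` is a set of representatives for the `(H,K)`-double cosets in `G`. -/
def IsDCR {G : Type*} [Group G] (H K : Subgroup G) (R : Finset G) : Prop :=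
  (∀ x : G, ∃ r ∈ R, ∃ h ∈ H, ∃ k ∈ K, x = h * r * k) ∧
    ∀ r ∈ R, ∀ r' ∈ R, (∃ h ∈ H, ∃ k ∈ K, r' = h * r * k) → r = r'

/-- The pair `(U ∩ ᵍV, φ|·(ᵍψ)|)` occurring in the product formula. -/
def mulPair {G : Type*} [Group G] (p q : Σ U : Subgroup G, (↥U →* A)) (g : G) :
    Σ U : Subgroup G, (↥U →* A) :=
  ⟨p.1 ⊓ (pairConj g q).1,
    (p.2.comp (Subgroup.inclusion inf_le_left)) *
      ((pairConj g q).2.comp (Subgroup.inclusion inf_le_right))⟩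

/-- Data exhibiting a `𝕂`-algebra `B` as the `A`-fibered Burnside algebra `B^A_𝕂(G)`:
the standard basis elements `b (U,φ) = [U,φ]_G` are conjugation invariant, span, are
linearly independent over pairwise non-conjugate pairs, `[G,1]_G = 1`, and multiply by the
double coset formula. -/
structure FiberedBurnsideData (A : Type*) [CommGroup A] (G : Type*) [Group G]
    (𝕂 : Type*) [Field 𝕂] (B : Type*) [Ring B] [Algebra 𝕂 B] where
  b : (Σ U : Subgroup G, (↥U →* A)) → B
  b_conj : ∀ (g : G) (p), b (pairConj g p) = b p
  b_one : b ⟨⊤, 1⟩ = 1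
  b_span : Submodule.span 𝕂 (Set.range b) = ⊤
  b_indep : ∀ s : Finset (Σ U : Subgroup G, (↥U →* A)),
      (∀ p ∈ s, ∀ q ∈ s, (∃ g : G, pairConj g p = q) → p = q) →
      LinearIndependent 𝕂 (fun p : {x // x ∈ s} => b p.1)
  b_mul : ∀ (p q) (R : Finset G), IsDCR p.1 q.1 R →
      b p * b q = ∑ r ∈ R, b (mulPair p q r)

end FiberedBurnside

/-- Conjugation action on pairs `(H, Φ)` with `H ≤ G` and `Φ` a `C`-valued character of the
character group `Hom(H,A)`:  `ᵍ(H,Φ) = (ᵍH, ᵍΦ)` where `ᵍΦ(φ') = Φ(ᵍ⁻¹φ')`. -/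
def charPairConj {G : Type*} [Group G] {A : Type*} [CommGroup A] {C : Type*} [CommGroup C]
    (g : G) (x : Σ H : Subgroup G, ((↥H →* A) →* C)) :
    Σ H : Subgroup G, ((↥H →* A) →* C) :=
  ⟨x.1.map ((MulAut.conj g : G ≃* G) : G →* G),
    x.2.comp
      { toFun := fun φ' =>
          φ'.comp ((MulEquiv.subgroupMap (MulAut.conj g : G ≃* G) x.1).toMonoidHom)
        map_one' := MonoidHom.one_comp _
        map_mul' := fun _ _ => MonoidHom.mul_comp _ _ _ }⟩



section Helpers

variable {A : Type*} [CommGroup A] {G : Type*} [Group G]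

/-- Equality of sigma pairs `(U, φ)` via an equality of the subgroups. -/
lemma pairSigma_eq_iff {U V : Subgroup G} (h : U = V) (φ : ↥U →* A) (ψ : ↥V →* A) :
    (⟨U, φ⟩ : Σ W : Subgroup G, (↥W →* A)) = ⟨V, ψ⟩ ↔
      ∀ x : ↥V, φ (Subgroup.inclusion h.ge x) = ψ x := by
  subst h
  have hincl : ∀ x : ↥U, Subgroup.inclusion (le_refl U) x = x := fun x => Subtype.ext rfl
  constructor
  · intro hEq x
    have h2 : φ = ψ := eq_of_heq (Sigma.mk.inj_iff.mp hEq).2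
    rw [hincl, h2]
  · intro hx
    have : φ = ψ := MonoidHom.ext fun x => by simpa [hincl] using hx x
    rw [this]

/-- Equality of sigma pairs `(H, Φ)` of subgroups and characters of character groups. -/
lemma charSigma_eq_iff {C : Type*} [CommGroup C] {U V : Subgroup G} (h : U = V)
    (Φ : (↥U →* A) →* C) (Ψ : (↥V →* A) →* C) :
    (⟨U, Φ⟩ : Σ W : Subgroup G, ((↥W →* A) →* C)) = ⟨V, Ψ⟩ ↔
      ∀ φ : ↥V →* A, Φ (φ.comp (Subgroup.inclusion h.le)) = Ψ φ := by
  subst h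
  have hincl : ∀ (φ : ↥U →* A), φ.comp (Subgroup.inclusion (le_refl U)) = φ :=
    fun φ => MonoidHom.ext fun x => congrArg φ (Subtype.ext rfl)
  constructor
  · intro hEq φ
    have h2 : Φ = Ψ := eq_of_heq (Sigma.mk.inj_iff.mp hEq).2
    rw [hincl, h2]
  · intro hφ
    have : Φ = Ψ := MonoidHom.ext fun φ => by simpa [hincl] using hφ φ
    rw [this]

lemma conj_mem_iff_le_map {L K : Subgroup G} {g : G} :
    L ≤ K.map ((MulAut.conj g : G ≃* G) : G →* G) ↔ ∀ x ∈ L, g⁻¹ * x * g ∈ K := by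
  constructor
  · intro h x hx
    obtain ⟨k, hk, hkx⟩ := h hx
    have hkx' : g * k * g⁻¹ = x := hkx
    have : k = g⁻¹ * x * g := by rw [← hkx']; group
    rwa [← this]
  · intro h x hx
    refine ⟨g⁻¹ * x * g, h x hx, ?_⟩
    show g * (g⁻¹ * x * g) * g⁻¹ = x
    group

/-- conjugation by an element of `K` fixes values of characters of `K`. -/
lemma conj_eval {K : Subgroup G} (χ : ↥K →* A) {c y : G} (hy : y ∈ K) (hc : c ∈ K)
    (h2 : c⁻¹ * y * c ∈ K) : χ ⟨c⁻¹ * y * c, h2⟩ = χ ⟨y, hy⟩ := by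
  have : (⟨c⁻¹ * y * c, h2⟩ : ↥K) = ⟨c, hc⟩⁻¹ * ⟨y, hy⟩ * ⟨c, hc⟩ := Subtype.ext rfl
  rw [this, map_mul, map_mul, map_inv, mul_comm, ← mul_assoc, mul_inv_cancel, one_mul]

end Helpers

section DCR

variable {G : Type*} [Group G]

/-- The double coset setoid. -/
def dcSetoid (L K : Subgroup G) : Setoid G where
  r x y := ∃ l ∈ L, ∃ k ∈ K, y = l * x * k
  iseqv := by
    constructor
    · intro x; exact ⟨1, one_mem L, 1, one_mem K, by group⟩
    · rintro x y ⟨l, hl, k, hk, rfl⟩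
      exact ⟨l⁻¹, inv_mem hl, k⁻¹, inv_mem hk, by group⟩
    · rintro x y z ⟨l, hl, k, hk, rfl⟩ ⟨l', hl', k', hk', rfl⟩
      exact ⟨l' * l, mul_mem hl' hl, k * k', mul_mem hk hk', by group⟩

lemma exists_isDCR [Fintype G] (L K : Subgroup G) : ∃ R : Finset G, IsDCR L K R := by
  haveI : Fintype (Quotient (dcSetoid L K)) := Quotient.fintype _
  refine ⟨Finset.univ.image (fun q : Quotient (dcSetoid L K) => q.out), ?_, ?_⟩
  · intro x
    refine ⟨(Quotient.mk (dcSetoid L K) x).out, Finset.mem_image_of_mem _ (Finset.mem_univ _), ?_⟩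
    have h : (dcSetoid L K).r (Quotient.mk (dcSetoid L K) x).out x := Quotient.mk_out x
    obtain ⟨l, hl, k, hk, hx⟩ := h
    exact ⟨l, hl, k, hk, hx⟩
  · intro r hr r' hr' hrel
    simp only [Finset.mem_image] at hr hr'
    obtain ⟨q, -, rfl⟩ := hr
    obtain ⟨q', -, rfl⟩ := hr'
    obtain ⟨l, hl, k, hk, h⟩ := hrel
    have : q = q' := by
      rw [← Quotient.out_eq q, ← Quotient.out_eq q']
      exact Quotient.sound ⟨l, hl, k, hk, h⟩
    rw [this]

variable {𝕂 : Type*} [Field 𝕂]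

lemma dcr_sum [Fintype G] {L K : Subgroup G} {R : Finset G} (hR : IsDCR L K R) (F : G → 𝕂)
    (hF : ∀ g : G, ∀ l ∈ L, ∀ k ∈ K, F (l * g * k) = F g)
    (hF0 : ∀ g : G, F g ≠ 0 → ∀ x ∈ L, g⁻¹ * x * g ∈ K) :
    ∑ g : G, F g = (Nat.card K : 𝕂) * ∑ r ∈ R, F r := by
  have hc : ∀ g : G, ∃ r, r ∈ R ∧ ∃ l ∈ L, ∃ k ∈ K, g = l * r * k := by
    intro g; obtain ⟨r, hr, l, hl, k, hk, h⟩ := hR.1 g; exact ⟨r, hr, l, hl, k, hk, h⟩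
  choose c hcR hcSpec using hc
  -- uniqueness of the classifying map
  have huniq : ∀ g : G, ∀ r ∈ R, (∃ l ∈ L, ∃ k ∈ K, g = l * r * k) → c g = r := by
    rintro g r hr ⟨l, hl, k, hk, hg⟩
    obtain ⟨l', hl', k', hk', hg'⟩ := hcSpec g
    refine (hR.2 r hr (c g) (hcR g) ⟨l'⁻¹ * l, mul_mem (inv_mem hl') hl,
      k * k'⁻¹, mul_mem hk (inv_mem hk'), ?_⟩).symm
    have : l * r * k = l' * c g * k' := by rw [← hg, ← hg']
    have h2 : c g = l'⁻¹ * (l * r * k) * k'⁻¹ := by rw [this]; group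
    rw [h2]; group
  rw [← Finset.sum_fiberwise_of_maps_to (g := c) (fun g _ => hcR g) F]
  rw [Finset.mul_sum]
  refine Finset.sum_congr rfl fun r hr => ?_
  by_cases hFr : F r = 0
  · rw [hFr, mul_zero]
    refine Finset.sum_eq_zero fun g hg => ?_
    simp only [Finset.mem_filter] at hg
    obtain ⟨l, hl, k, hk, hgd⟩ := hcSpec g
    rw [hg.2] at hgd
    rw [hgd, hF r l hl k hk, hFr]
  · have hrK : ∀ x ∈ L, r⁻¹ * x * r ∈ K := hF0 r hFr
    have hfib : Finset.univ.filter (fun g => c g = r) = Finset.univ.image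
        (fun k : ↥K => r * (k : G)) := by
      ext g
      simp only [Finset.mem_filter, Finset.mem_univ, true_and, Finset.mem_image]
      constructor
      · intro hg
        obtain ⟨l, hl, k, hk, hgd⟩ := hcSpec g
        rw [hg] at hgd
        refine ⟨⟨(r⁻¹ * l * r) * k, mul_mem (hrK l hl) hk⟩, ?_⟩
        rw [hgd]; show r * (r⁻¹ * l * r * k) = l * r * k; group
      · rintro ⟨k, rfl⟩
        exact huniq _ r hr ⟨1, one_mem L, k, k.2, by group⟩
    rw [hfib, Finset.sum_image (by
      intro a _ b _ hab
      exact Subtype.ext (by exact mul_left_cancel hab))]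
    have : ∀ k : ↥K, F (r * (k : G)) = F r := fun k => by
      have : r * (k : G) = 1 * r * (k : G) := by group
      rw [this, hF r 1 (one_mem L) k k.2]
    rw [Finset.sum_congr rfl fun k _ => this k, Finset.sum_const, Nat.card_eq_fintype_card,
      ← Finset.card_univ, nsmul_eq_mul]

end DCR

section Characters

variable {𝕂 : Type*} [Field 𝕂]

/-- Elementary orthogonality: the sum of a character of a finite commutative group. -/
lemma char_sum_eq {M : Type*} [CommGroup M] [Fintype M] (χ : M →* 𝕂ˣ) :
    ∑ x : M, ((χ x : 𝕂ˣ) : 𝕂) = if χ = 1 then (Fintype.card M : 𝕂) else 0 := by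
  split_ifs with h
  · subst h; simp
  · have hx : ∃ x₀ : M, χ x₀ ≠ 1 := by
      by_contra hc
      push_neg at hc
      exact h (MonoidHom.ext fun x => hc x)
    obtain ⟨x₀, hx₀⟩ := hx
    have key : ((χ x₀ : 𝕂ˣ) : 𝕂) * ∑ x : M, ((χ x : 𝕂ˣ) : 𝕂) = ∑ x : M, ((χ x : 𝕂ˣ) : 𝕂) := by
      rw [Finset.mul_sum]
      rw [← Equiv.sum_comp (Equiv.mulLeft x₀) (fun x => ((χ x : 𝕂ˣ) : 𝕂))]
      refine Finset.sum_congr rfl fun x _ => ?_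
      simp [map_mul]
    have : (((χ x₀ : 𝕂ˣ) : 𝕂) - 1) * ∑ x : M, ((χ x : 𝕂ˣ) : 𝕂) = 0 := by
      rw [sub_mul, one_mul, key, sub_self]
    rcases mul_eq_zero.mp this with h1 | h2
    · exact absurd (Units.ext (by simpa using sub_eq_zero.mp h1)) hx₀
    · exact h2

lemma finite_dual {M : Type*} [CommGroup M] [Finite M] : Finite (M →* 𝕂ˣ) := by
  haveI : Fintype M := Fintype.ofFinite M
  have hmem : ∀ (Ψ : M →* 𝕂ˣ) (a : M), Ψ a ∈ rootsOfUnity (Fintype.card M) 𝕂 := by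
    intro Ψ a
    rw [mem_rootsOfUnity]
    rw [← map_pow, pow_card_eq_one, map_one]
  refine Finite.of_injective (fun Ψ : M →* 𝕂ˣ =>
    (fun a => (⟨Ψ a, hmem Ψ a⟩ : rootsOfUnity (Fintype.card M) 𝕂))) ?_
  intro Ψ₁ Ψ₂ h
  refine MonoidHom.ext fun a => ?_
  have h2 := congrFun h a
  exact congrArg Subtype.val h2

/-- Orthogonality for the dual group: requires enough roots of unity. -/
lemma dual_sum {M : Type*} [CommGroup M] [Finite M]
    (hsp : ∃ ζ : 𝕂, IsPrimitiveRoot ζ (Monoid.exponent M)) (a : M) [Fintype (M →* 𝕂ˣ)] :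
    ∑ Ψ : M →* 𝕂ˣ, ((Ψ a : 𝕂ˣ) : 𝕂) =
      if a = 1 then (Fintype.card (M →* 𝕂ˣ) : 𝕂) else 0 := by
  haveI : NeZero (Monoid.exponent M) := ⟨Monoid.exponent_ne_zero_of_finite⟩
  haveI : HasEnoughRootsOfUnity 𝕂 (Monoid.exponent M) := ⟨hsp, inferInstance⟩
  let ev : (M →* 𝕂ˣ) →* 𝕂ˣ :=
    { toFun := fun Ψ => Ψ a, map_one' := rfl, map_mul' := fun _ _ => rfl }
  have h := char_sum_eq ev
  have hiff : ev = 1 ↔ a = 1 := by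
    constructor
    · intro hev
      by_contra ha
      obtain ⟨Ψ, hΨ⟩ := CommGroup.exists_apply_ne_one_of_hasEnoughRootsOfUnity M 𝕂 ha
      exact hΨ (by simpa [ev] using congrArg (fun f => f Ψ) hev)
    · intro ha; subst ha; exact MonoidHom.ext fun Ψ => by simp [ev]
  rw [show (∑ Ψ : M →* 𝕂ˣ, ((Ψ a : 𝕂ˣ) : 𝕂)) = ∑ Ψ : M →* 𝕂ˣ, ((ev Ψ : 𝕂ˣ) : 𝕂) from rfl, h]
  by_cases ha : a = 1
  · rw [if_pos ha, if_pos (hiff.mpr ha)]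
  · rw [if_neg ha, if_neg (fun hc => ha (hiff.mp hc))]

end Characters


section ConjHelpers

variable {A : Type*} [CommGroup A] {G : Type*} [Group G]

lemma mem_map_conj_iff {K : Subgroup G} {g x : G} :
    x ∈ K.map ((MulAut.conj g : G ≃* G) : G →* G) ↔ g⁻¹ * x * g ∈ K := by
  constructor
  · rintro ⟨k, hk, rfl⟩
    have : g⁻¹ * (g * k * g⁻¹) * g = k := by group
    show g⁻¹ * (g * k * g⁻¹) * g ∈ K
    rwa [this]
  · intro h
    refine ⟨g⁻¹ * x * g, h, ?_⟩
    show g * (g⁻¹ * x * g) * g⁻¹ = x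
    group

lemma map_conj_mul (U : Subgroup G) (g h : G) :
    U.map ((MulAut.conj (g * h) : G ≃* G) : G →* G) =
      (U.map ((MulAut.conj h : G ≃* G) : G →* G)).map ((MulAut.conj g : G ≃* G) : G →* G) := by
  rw [Subgroup.map_map]
  congr 1
  ext x
  show (g * h) * x * (g * h)⁻¹ = g * (h * x * h⁻¹) * g⁻¹
  group

lemma map_conj_one (U : Subgroup G) :
    U.map ((MulAut.conj (1 : G) : G ≃* G) : G →* G) = U := by
  have : ((MulAut.conj (1 : G) : G ≃* G) : G →* G) = MonoidHom.id G := by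
    ext x; show 1 * x * 1⁻¹ = x; group
  rw [this, Subgroup.map_id]

lemma map_conj_self {K : Subgroup G} {r : G} (hr : r ∈ K) :
    K.map ((MulAut.conj r : G ≃* G) : G →* G) = K := by
  ext x
  rw [mem_map_conj_iff]
  constructor
  · intro h
    have : x = r * (r⁻¹ * x * r) * r⁻¹ := by group
    rw [this]
    exact mul_mem (mul_mem hr h) (inv_mem hr)
  · intro h
    exact mul_mem (mul_mem (inv_mem hr) h) hr

/-- Conjugation-restriction of characters: `(resConj L K g hg φ) x = φ (g⁻¹ x g)`. -/
def resConj (L K : Subgroup G) (g : G) (hg : ∀ x ∈ L, g⁻¹ * x * g ∈ K) :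
    (↥K →* A) →* (↥L →* A) where
  toFun φ :=
    { toFun := fun x => φ ⟨g⁻¹ * ↑x * g, hg ↑x x.2⟩
      map_one' := by
        have h1 : (⟨g⁻¹ * ((1 : ↥L) : G) * g, hg _ (one_mem L)⟩ : ↥K) = 1 := by
          apply Subtype.ext
          show g⁻¹ * ((1 : ↥L) : G) * g = 1
          rw [Subgroup.coe_one]; group
        exact (congrArg φ h1).trans (map_one φ)
      map_mul' := fun x y => by
        rw [← map_mul]
        apply congrArg φ
        apply Subtype.ext
        show g⁻¹ * (↑x * ↑y) * g = (g⁻¹ * ↑x * g) * (g⁻¹ * ↑y * g)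
        group }
  map_one' := MonoidHom.ext fun x => rfl
  map_mul' := fun φ ψ => MonoidHom.ext fun x => rfl

lemma pairConj_snd_apply {U : Subgroup G} (ψ : ↥U →* A) (g : G)
    (y : ↥(U.map ((MulAut.conj g : G ≃* G) : G →* G))) (h : g⁻¹ * ↑y * g ∈ U) :
    (pairConj (A := A) g ⟨U, ψ⟩).2 y = ψ ⟨g⁻¹ * ↑y * g, h⟩ := by
  show ψ ((MulEquiv.subgroupMap (MulAut.conj g : G ≃* G) U).symm y) = _
  apply congrArg ψ
  rw [MulEquiv.subgroupMap_symm_apply]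
  apply Subtype.ext
  rfl

lemma pairConj_comp_inclusion_eq {L U : Subgroup G} (ψ : ↥U →* A) (g : G)
    (h : L ≤ (pairConj (A := A) g ⟨U, ψ⟩).1) :
    (pairConj (A := A) g ⟨U, ψ⟩).2.comp (Subgroup.inclusion h) =
      resConj L U g (fun x hx => mem_map_conj_iff.mp (h hx)) ψ := by
  refine MonoidHom.ext fun x => ?_
  rw [MonoidHom.comp_apply]
  rw [pairConj_snd_apply ψ g (Subgroup.inclusion h x)
    (mem_map_conj_iff.mp (h x.2))]
  rfl

lemma pairConj_one (p : Σ U : Subgroup G, (↥U →* A)) : pairConj (1 : G) p = p := by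
  obtain ⟨U, ψ⟩ := p
  show (⟨U.map ((MulAut.conj (1:G) : G ≃* G) : G →* G),
    (pairConj (A := A) (1:G) ⟨U, ψ⟩).2⟩ : Σ V : Subgroup G, (↥V →* A)) = ⟨U, ψ⟩
  refine (pairSigma_eq_iff (map_conj_one U) _ _).mpr ?_
  intro x
  have hmem : (1:G)⁻¹ * ↑(Subgroup.inclusion (map_conj_one U).ge x) * 1 ∈ U := by
    have hcoe : (1:G)⁻¹ * ↑(Subgroup.inclusion (map_conj_one U).ge x) * 1 = ↑x := by
      rw [Subgroup.coe_inclusion]; group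
    rw [hcoe]; exact x.2
  refine (pairConj_snd_apply ψ 1 (Subgroup.inclusion (map_conj_one U).ge x) hmem).trans ?_
  apply congrArg ψ
  apply Subtype.ext
  show (1:G)⁻¹ * ↑(Subgroup.inclusion (map_conj_one U).ge x) * 1 = ↑x
  rw [Subgroup.coe_inclusion]; group

lemma pairConj_mul (g h : G) (p : Σ U : Subgroup G, (↥U →* A)) :
    pairConj (g * h) p = pairConj g (pairConj h p) := by
  obtain ⟨U, ψ⟩ := p
  have h1 : (pairConj (A := A) (g*h) ⟨U, ψ⟩).1 = (pairConj (A := A) g (pairConj h ⟨U, ψ⟩)).1 :=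
    map_conj_mul U g h
  show (⟨U.map ((MulAut.conj (g*h) : G ≃* G) : G →* G),
      (pairConj (A := A) (g*h) ⟨U, ψ⟩).2⟩ : Σ V : Subgroup G, (↥V →* A)) =
    ⟨(U.map ((MulAut.conj h : G ≃* G) : G →* G)).map ((MulAut.conj g : G ≃* G) : G →* G),
      (pairConj (A := A) g (pairConj h ⟨U, ψ⟩)).2⟩
  refine (pairSigma_eq_iff (map_conj_mul U g h) _ _).mpr ?_
  intro x
  -- x lives in ((U.map (conj h)).map (conj g))
  have hx1 : g⁻¹ * ↑x * g ∈ U.map ((MulAut.conj h : G ≃* G) : G →* G) :=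
    mem_map_conj_iff.mp x.2
  have hx2 : h⁻¹ * (g⁻¹ * ↑x * g) * h ∈ U := mem_map_conj_iff.mp hx1
  have hx3 : (g*h)⁻¹ * ↑(Subgroup.inclusion h1.ge x) * (g*h) ∈ U := by
    show (g*h)⁻¹ * (x : G) * (g*h) ∈ U
    have : (g*h)⁻¹ * ↑x * (g*h) = h⁻¹ * (g⁻¹ * ↑x * g) * h := by group
    rw [this]; exact hx2
  refine (pairConj_snd_apply ψ (g*h) (Subgroup.inclusion (map_conj_mul U g h).ge x) hx3).trans ?_
  refine Eq.trans ?_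
    ((pairConj_snd_apply (U := U.map ((MulAut.conj h : G ≃* G) : G →* G))
      ((pairConj h ⟨U, ψ⟩).2) g x hx1).symm)
  refine Eq.trans ?_ ((pairConj_snd_apply ψ h ⟨g⁻¹ * ↑x * g, hx1⟩ hx2).symm)
  apply congrArg ψ
  apply Subtype.ext
  show (g*h)⁻¹ * ↑(Subgroup.inclusion (map_conj_mul U g h).ge x) * (g*h) =
    h⁻¹ * (g⁻¹ * ↑x * g) * h
  rw [Subgroup.coe_inclusion]
  group

end ConjHelpers


section CharConjHelpers

variable {A : Type*} [CommGroup A] {G : Type*} [Group G] {C : Type*} [CommGroup C]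

lemma charPairConj_eq_iff {U L : Subgroup G} (Φ : (↥U →* A) →* C) (Ψ : (↥L →* A) →* C)
    (g : G) (hL : U.map ((MulAut.conj g : G ≃* G) : G →* G) = L)
    (hgU : ∀ x ∈ L, g⁻¹ * x * g ∈ U) :
    charPairConj g (⟨U, Φ⟩ : Σ W : Subgroup G, ((↥W →* A) →* C)) = ⟨L, Ψ⟩ ↔
      ∀ φ : ↥U →* A, Φ φ = Ψ (resConj L U g hgU φ) := by
  show (⟨U.map ((MulAut.conj g : G ≃* G) : G →* G),
      (charPairConj g (⟨U, Φ⟩ : Σ W : Subgroup G, ((↥W →* A) →* C))).2⟩ :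
      Σ W : Subgroup G, ((↥W →* A) →* C)) = ⟨L, Ψ⟩ ↔ _
  refine (charSigma_eq_iff hL _ _).trans ?_
  constructor
  · intro hfor φ
    have h1 := hfor (resConj L U g hgU φ)
    rw [← h1]
    show Φ φ = Φ (((resConj L U g hgU φ).comp (Subgroup.inclusion hL.le)).comp
      ((MulEquiv.subgroupMap (MulAut.conj g : G ≃* G) U).toMonoidHom))
    refine congrArg Φ (MonoidHom.ext fun x => ?_).symm
    show (resConj L U g hgU φ) (Subgroup.inclusion hL.le
      ((MulEquiv.subgroupMap (MulAut.conj g : G ≃* G) U) x)) = φ x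
    show φ ⟨g⁻¹ * ↑(Subgroup.inclusion hL.le
      ((MulEquiv.subgroupMap (MulAut.conj g : G ≃* G) U) x)) * g, _⟩ = φ x
    refine congrArg φ (Subtype.ext ?_)
    show g⁻¹ * ↑(Subgroup.inclusion hL.le
      ((MulEquiv.subgroupMap (MulAut.conj g : G ≃* G) U) x)) * g = ↑x
    rw [Subgroup.coe_inclusion, MulEquiv.coe_subgroupMap_apply]
    show g⁻¹ * (g * ↑x * g⁻¹) * g = ↑x
    group
  · intro hall φ'
    show Φ ((φ'.comp (Subgroup.inclusion hL.le)).comp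
      ((MulEquiv.subgroupMap (MulAut.conj g : G ≃* G) U).toMonoidHom)) = Ψ φ'
    rw [hall]
    refine congrArg Ψ (MonoidHom.ext fun x => ?_)
    show ((φ'.comp (Subgroup.inclusion hL.le)).comp
      ((MulEquiv.subgroupMap (MulAut.conj g : G ≃* G) U).toMonoidHom))
        ⟨g⁻¹ * ↑x * g, hgU ↑x x.2⟩ = φ' x
    show φ' (Subgroup.inclusion hL.le
      ((MulEquiv.subgroupMap (MulAut.conj g : G ≃* G) U) ⟨g⁻¹ * ↑x * g, hgU ↑x x.2⟩)) = φ' x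
    refine congrArg φ' (Subtype.ext ?_)
    rw [Subgroup.coe_inclusion, MulEquiv.coe_subgroupMap_apply]
    show g * (g⁻¹ * ↑x * g) * g⁻¹ = ↑x
    group

lemma charPairConj_fst (g : G) (x : Σ W : Subgroup G, ((↥W →* A) →* C)) :
    (charPairConj g x).1 = x.1.map ((MulAut.conj g : G ≃* G) : G →* G) := rfl

lemma charPairConj_one (x : Σ W : Subgroup G, ((↥W →* A) →* C)) :
    charPairConj (1 : G) x = x := by
  obtain ⟨U, Φ⟩ := x
  show (⟨U.map ((MulAut.conj (1:G) : G ≃* G) : G →* G),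
      (charPairConj (1:G) (⟨U, Φ⟩ : Σ W : Subgroup G, ((↥W →* A) →* C))).2⟩ :
      Σ W : Subgroup G, ((↥W →* A) →* C)) = ⟨U, Φ⟩
  refine (charSigma_eq_iff (map_conj_one U) _ _).mpr ?_
  intro φ
  show Φ ((φ.comp (Subgroup.inclusion (map_conj_one U).le)).comp
    ((MulEquiv.subgroupMap (MulAut.conj (1:G) : G ≃* G) U).toMonoidHom)) = Φ φ
  refine congrArg Φ (MonoidHom.ext fun x => ?_)
  show φ (Subgroup.inclusion (map_conj_one U).le
    ((MulEquiv.subgroupMap (MulAut.conj (1:G) : G ≃* G) U) x)) = φ x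
  refine congrArg φ (Subtype.ext ?_)
  rw [Subgroup.coe_inclusion, MulEquiv.coe_subgroupMap_apply]
  show (1:G) * ↑x * (1:G)⁻¹ = ↑x
  group

lemma charPairConj_mul (g h : G) (x : Σ W : Subgroup G, ((↥W →* A) →* C)) :
    charPairConj (g * h) x = charPairConj g (charPairConj h x) := by
  obtain ⟨U, Φ⟩ := x
  show (⟨U.map ((MulAut.conj (g*h) : G ≃* G) : G →* G),
      (charPairConj (g*h) (⟨U, Φ⟩ : Σ W : Subgroup G, ((↥W →* A) →* C))).2⟩ :
      Σ W : Subgroup G, ((↥W →* A) →* C)) =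
    ⟨(U.map ((MulAut.conj h : G ≃* G) : G →* G)).map ((MulAut.conj g : G ≃* G) : G →* G),
      (charPairConj g (charPairConj h (⟨U, Φ⟩ : Σ W : Subgroup G, ((↥W →* A) →* C)))).2⟩
  refine (charSigma_eq_iff (map_conj_mul U g h) _ _).mpr ?_
  intro φ'
  show Φ ((φ'.comp (Subgroup.inclusion (map_conj_mul U g h).le)).comp
    ((MulEquiv.subgroupMap (MulAut.conj (g*h) : G ≃* G) U).toMonoidHom)) =
    Φ ((φ'.comp ((MulEquiv.subgroupMap (MulAut.conj g : G ≃* G)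
        (U.map ((MulAut.conj h : G ≃* G) : G →* G))).toMonoidHom)).comp
      ((MulEquiv.subgroupMap (MulAut.conj h : G ≃* G) U).toMonoidHom))
  refine congrArg Φ (MonoidHom.ext fun x => ?_)
  show φ' (Subgroup.inclusion (map_conj_mul U g h).le
      ((MulEquiv.subgroupMap (MulAut.conj (g*h) : G ≃* G) U) x)) =
    φ' ((MulEquiv.subgroupMap (MulAut.conj g : G ≃* G)
        (U.map ((MulAut.conj h : G ≃* G) : G →* G)))
      ((MulEquiv.subgroupMap (MulAut.conj h : G ≃* G) U) x))
  refine congrArg φ' (Subtype.ext ?_)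
  rw [Subgroup.coe_inclusion, MulEquiv.coe_subgroupMap_apply,
    MulEquiv.coe_subgroupMap_apply, MulEquiv.coe_subgroupMap_apply]
  show (g*h) * ↑x * (g*h)⁻¹ = g * (h * ↑x * h⁻¹) * g⁻¹
  group

end CharConjHelpers


section Injectivity

/-- The predicate that `r` conjugates `p` exactly onto the pair `(K, φ₀)`. -/
def goodRep {A G : Type*} [CommGroup A] [Group G] (K : Subgroup G) (φ₀ : ↥K →* A)
    (p : Σ U : Subgroup G, (↥U →* A)) (r : G) : Prop :=
  ∃ h : K ≤ (pairConj (A := A) r p).1,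
    (pairConj (A := A) r p).2.comp (Subgroup.inclusion h) = φ₀

variable {A G 𝕂 B : Type*} [CommGroup A] [Group G] [Fintype G]
    [Fintype (Subgroup G)] [Field 𝕂] [CharZero 𝕂] [Ring B] [Algebra 𝕂 B]

lemma species_injective
    (hfin : ∀ K : Subgroup G, Finite (↥K →* A))
    (hsplit : ∀ K : Subgroup G, ∃ ζ : 𝕂, IsPrimitiveRoot ζ (Monoid.exponent (↥K →* A)))
    (ℬ : FiberedBurnsideData A G 𝕂 B)
    (s : ∀ K : Subgroup G, ((↥K →* A) →* 𝕂ˣ) → (B →ₗ[𝕂] 𝕂))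
    (hs : ∀ (K : Subgroup G) (Ψ : (↥K →* A) →* 𝕂ˣ) (p : Σ U : Subgroup G, (↥U →* A))
      (R : Finset G), IsDCR K p.1 R →
      s K Ψ (ℬ.b p) = ∑ r ∈ R,
        (if h : K ≤ (pairConj r p).1 then
          ((Ψ ((pairConj r p).2.comp (Subgroup.inclusion h)) : 𝕂ˣ) : 𝕂) else 0))
    (x : B) (hx : ∀ (K : Subgroup G) (Ψ : (↥K →* A) →* 𝕂ˣ), s K Ψ x = 0) : x = 0 := by
  haveI hPF : ∀ U : Subgroup G, Finite (↥U →* A) := hfin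
  haveI : Finite (Σ U : Subgroup G, (↥U →* A)) := inferInstance
  haveI : Fintype (Σ U : Subgroup G, (↥U →* A)) := Fintype.ofFinite _
  -- the key claim, by strong induction on finsets of pairwise non-conjugate pairs
  have claim : ∀ T : Finset (Σ U : Subgroup G, (↥U →* A)),
      (∀ p ∈ T, ∀ q ∈ T, (∃ g : G, pairConj g p = q) → p = q) →
      ∀ d : (Σ U : Subgroup G, (↥U →* A)) → 𝕂,
      (∀ (K : Subgroup G) (Ψ : (↥K →* A) →* 𝕂ˣ), s K Ψ (∑ q ∈ T, d q • ℬ.b q) = 0) →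
      ∀ q ∈ T, d q = 0 := by
    intro T
    induction T using Finset.strongInduction with
    | _ T ih =>
      intro hT d hd q hq
      obtain ⟨p₀, hp₀T, hmax⟩ := T.exists_max_image (fun p => Nat.card p.1) ⟨q, hq⟩
      haveI : Finite (↥p₀.1 →* A) := hfin p₀.1
      haveI : Fintype (↥p₀.1 →* A) := Fintype.ofFinite _
      haveI : Finite ((↥p₀.1 →* A) →* 𝕂ˣ) := finite_dual
      haveI : Fintype ((↥p₀.1 →* A) →* 𝕂ˣ) := Fintype.ofFinite _
      haveI : Nonempty ((↥p₀.1 →* A) →* 𝕂ˣ) := ⟨1⟩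
      -- double coset representatives
      have hRex : ∀ p : Σ U : Subgroup G, (↥U →* A), ∃ R : Finset G, IsDCR p₀.1 p.1 R :=
        fun p => exists_isDCR p₀.1 p.1
      choose R hR using hRex
      -- the weighted species sum on basis elements
      have hIQ : ∀ p : Σ U : Subgroup G, (↥U →* A),
          (∑ Ψ : (↥p₀.1 →* A) →* 𝕂ˣ, ((Ψ p₀.2 : 𝕂ˣ) : 𝕂)⁻¹ * s p₀.1 Ψ (ℬ.b p)) =
            (((R p).filter (goodRep p₀.1 p₀.2 p)).card : 𝕂) *
              (Fintype.card ((↥p₀.1 →* A) →* 𝕂ˣ) : 𝕂) := by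
        intro p
        calc ∑ Ψ : (↥p₀.1 →* A) →* 𝕂ˣ, ((Ψ p₀.2 : 𝕂ˣ) : 𝕂)⁻¹ * s p₀.1 Ψ (ℬ.b p)
            = ∑ Ψ : (↥p₀.1 →* A) →* 𝕂ˣ, ∑ r ∈ R p, ((Ψ p₀.2 : 𝕂ˣ) : 𝕂)⁻¹ *
              (if h : p₀.1 ≤ (pairConj r p).1 then
                ((Ψ ((pairConj r p).2.comp (Subgroup.inclusion h)) : 𝕂ˣ) : 𝕂) else 0) := by
              refine Finset.sum_congr rfl fun Ψ _ => ?_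
              rw [hs p₀.1 Ψ p (R p) (hR p), Finset.mul_sum]
          _ = ∑ r ∈ R p, ∑ Ψ : (↥p₀.1 →* A) →* 𝕂ˣ, ((Ψ p₀.2 : 𝕂ˣ) : 𝕂)⁻¹ *
              (if h : p₀.1 ≤ (pairConj r p).1 then
                ((Ψ ((pairConj r p).2.comp (Subgroup.inclusion h)) : 𝕂ˣ) : 𝕂) else 0) :=
              Finset.sum_comm
          _ = ∑ r ∈ R p, (if goodRep p₀.1 p₀.2 p r then
                (Fintype.card ((↥p₀.1 →* A) →* 𝕂ˣ) : 𝕂) else 0) := by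
              refine Finset.sum_congr rfl fun r _ => ?_
              by_cases hle : p₀.1 ≤ (pairConj r p).1
              · have h1 : ∀ Ψ : (↥p₀.1 →* A) →* 𝕂ˣ, ((Ψ p₀.2 : 𝕂ˣ) : 𝕂)⁻¹ *
                    (if h : p₀.1 ≤ (pairConj r p).1 then
                      ((Ψ ((pairConj r p).2.comp (Subgroup.inclusion h)) : 𝕂ˣ) : 𝕂) else 0) =
                    ((Ψ (p₀.2⁻¹ * (pairConj r p).2.comp (Subgroup.inclusion hle)) : 𝕂ˣ) : 𝕂) := by
                  intro Ψ
                  rw [dif_pos hle, map_mul, map_inv, Units.val_mul, Units.val_inv_eq_inv_val]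
                rw [Finset.sum_congr rfl fun Ψ _ => h1 Ψ,
                  dual_sum (hsplit p₀.1) (p₀.2⁻¹ * (pairConj r p).2.comp (Subgroup.inclusion hle))]
                have hiff : (p₀.2⁻¹ * (pairConj r p).2.comp (Subgroup.inclusion hle) = 1) ↔
                    goodRep p₀.1 p₀.2 p r := by
                  rw [inv_mul_eq_one]
                  exact ⟨fun h => ⟨hle, h.symm⟩, fun h2 => h2.2.symm⟩
                by_cases hgd : goodRep p₀.1 p₀.2 p r
                · rw [if_pos (hiff.mpr hgd), if_pos hgd]
                · rw [if_neg (fun h => hgd (hiff.mp h)), if_neg hgd]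
              · rw [if_neg (fun hgd => hle hgd.1)]
                refine Finset.sum_eq_zero fun Ψ _ => ?_
                rw [dif_neg hle, mul_zero]
          _ = (((R p).filter (goodRep p₀.1 p₀.2 p)).card : 𝕂) *
              (Fintype.card ((↥p₀.1 →* A) →* 𝕂ˣ) : 𝕂) := by
              rw [← Finset.sum_filter, Finset.sum_const, nsmul_eq_mul]
      -- goodness implies conjugacy to p₀
      have hgood_imp : ∀ p ∈ T, ∀ r : G, goodRep p₀.1 p₀.2 p r → p = p₀ := by
        intro p hpT r hgd
        obtain ⟨hle, hχ⟩ := hgd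
        have hcard : Nat.card ↥((pairConj (A := A) r p).1) ≤ Nat.card ↥p₀.1 := by
          have h1 : Nat.card ↥((pairConj (A := A) r p).1) = Nat.card ↥p.1 :=
            (Nat.card_congr (MulEquiv.subgroupMap (MulAut.conj r : G ≃* G) p.1).toEquiv).symm
          rw [h1]
          exact hmax p hpT
        have hKeq : p₀.1 = (pairConj (A := A) r p).1 :=
          Subgroup.eq_of_le_of_card_ge hle hcard
        refine hT p hpT p₀ hp₀T ⟨r, ?_⟩
        show (⟨(pairConj (A := A) r p).1, (pairConj (A := A) r p).2⟩ :
          Σ U : Subgroup G, (↥U →* A)) = ⟨p₀.1, p₀.2⟩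
        rw [pairSigma_eq_iff hKeq.symm]
        intro y
        have h3 : Subgroup.inclusion hKeq.symm.ge y = Subgroup.inclusion hle y :=
          Subtype.ext rfl
        rw [h3]
        exact DFunLike.congr_fun hχ y
      -- there is a good representative for p₀ itself
      have hgoodex : ∃ r ∈ R p₀, goodRep p₀.1 p₀.2 p₀ r := by
        obtain ⟨r, hrR, l, hl, k, hk, h1⟩ := (hR p₀).1 1
        have hrK : r ∈ p₀.1 := by
          have h2 : l⁻¹ * (l * r * k) * k⁻¹ = r := by group
          rw [← h1] at h2
          have h3 : l⁻¹ * 1 * k⁻¹ = l⁻¹ * k⁻¹ := by group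
          rw [h3] at h2
          rw [← h2]
          exact mul_mem (inv_mem hl) (inv_mem hk)
        refine ⟨r, hrR, (map_conj_self hrK).ge, ?_⟩
        refine MonoidHom.ext fun y => ?_
        have hmem : r⁻¹ * ↑(Subgroup.inclusion (map_conj_self hrK).ge y) * r ∈ p₀.1 := by
          rw [Subgroup.coe_inclusion]
          exact mul_mem (mul_mem (inv_mem hrK) y.2) hrK
        refine (pairConj_snd_apply p₀.2 r (Subgroup.inclusion (map_conj_self hrK).ge y)
          hmem).trans ?_
        have hcoe : r⁻¹ * ↑(Subgroup.inclusion (map_conj_self hrK).ge y) * r = r⁻¹ * ↑y * r := by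
          rw [Subgroup.coe_inclusion]
        have hmem' : r⁻¹ * ↑y * r ∈ p₀.1 := hcoe ▸ hmem
        have h4 : (⟨r⁻¹ * ↑(Subgroup.inclusion (map_conj_self hrK).ge y) * r, hmem⟩ : ↥p₀.1) =
            ⟨r⁻¹ * ↑y * r, hmem'⟩ := Subtype.ext hcoe
        rw [h4, conj_eval p₀.2 y.2 hrK hmem']
      -- now derive d p₀ = 0
      have hdp₀ : d p₀ = 0 := by
        have hzero : ∑ p ∈ T, d p *
            (∑ Ψ : (↥p₀.1 →* A) →* 𝕂ˣ, ((Ψ p₀.2 : 𝕂ˣ) : 𝕂)⁻¹ * s p₀.1 Ψ (ℬ.b p)) = 0 := by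
          have hswap : ∑ p ∈ T, d p *
              (∑ Ψ : (↥p₀.1 →* A) →* 𝕂ˣ, ((Ψ p₀.2 : 𝕂ˣ) : 𝕂)⁻¹ * s p₀.1 Ψ (ℬ.b p)) =
              ∑ Ψ : (↥p₀.1 →* A) →* 𝕂ˣ, ((Ψ p₀.2 : 𝕂ˣ) : 𝕂)⁻¹ *
                (∑ p ∈ T, d p * s p₀.1 Ψ (ℬ.b p)) := by
            rw [Finset.sum_congr rfl fun p _ => Finset.mul_sum _ _ _]
            rw [Finset.sum_comm]
            refine Finset.sum_congr rfl fun Ψ _ => ?_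
            rw [Finset.mul_sum]
            refine Finset.sum_congr rfl fun p _ => by ring
          rw [hswap]
          refine Finset.sum_eq_zero fun Ψ _ => ?_
          have hE : ∑ p ∈ T, d p * s p₀.1 Ψ (ℬ.b p) = 0 := by
            have h0 := hd p₀.1 Ψ
            rw [map_sum] at h0
            rw [← h0]
            refine Finset.sum_congr rfl fun p _ => ?_
            rw [map_smul, smul_eq_mul]
          rw [hE, mul_zero]
        have hzero2 : ∑ p ∈ T, d p * ((((R p).filter (goodRep p₀.1 p₀.2 p)).card : 𝕂) *
            (Fintype.card ((↥p₀.1 →* A) →* 𝕂ˣ) : 𝕂)) = 0 := by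
          calc ∑ p ∈ T, d p * ((((R p).filter (goodRep p₀.1 p₀.2 p)).card : 𝕂) *
              (Fintype.card ((↥p₀.1 →* A) →* 𝕂ˣ) : 𝕂))
              = ∑ p ∈ T, d p *
                (∑ Ψ : (↥p₀.1 →* A) →* 𝕂ˣ, ((Ψ p₀.2 : 𝕂ˣ) : 𝕂)⁻¹ * s p₀.1 Ψ (ℬ.b p)) :=
                Finset.sum_congr rfl fun p _ => by rw [hIQ p]
            _ = 0 := hzero
        have hother : ∀ p ∈ T, p ≠ p₀ →
            d p * ((((R p).filter (goodRep p₀.1 p₀.2 p)).card : 𝕂) *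
              (Fintype.card ((↥p₀.1 →* A) →* 𝕂ˣ) : 𝕂)) = 0 := by
          intro p hp hne
          have hemp : (R p).filter (goodRep p₀.1 p₀.2 p) = ∅ :=
            Finset.filter_eq_empty_iff.mpr (fun {r} hr hgd => hne (hgood_imp p hp r hgd))
          rw [hemp]
          simp
        have hfinal : d p₀ * ((((R p₀).filter (goodRep p₀.1 p₀.2 p₀)).card : 𝕂) *
            (Fintype.card ((↥p₀.1 →* A) →* 𝕂ˣ) : 𝕂)) = 0 := by
          rw [← Finset.sum_eq_single_of_mem p₀ hp₀T hother]
          exact hzero2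
        have hn : (((R p₀).filter (goodRep p₀.1 p₀.2 p₀)).card : 𝕂) ≠ 0 := by
          obtain ⟨r, hrR, hgd⟩ := hgoodex
          exact Nat.cast_ne_zero.mpr
            (Finset.card_ne_zero_of_mem (Finset.mem_filter.mpr ⟨hrR, hgd⟩))
        have hcD : (Fintype.card ((↥p₀.1 →* A) →* 𝕂ˣ) : 𝕂) ≠ 0 :=
          Nat.cast_ne_zero.mpr Fintype.card_ne_zero
        rcases mul_eq_zero.mp hfinal with h | h
        · exact h
        · exact absurd h (mul_ne_zero hn hcD)
      by_cases hqp : q = p₀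
      · rw [hqp]; exact hdp₀
      · refine ih (T.erase p₀) (Finset.erase_ssubset hp₀T)
          (fun a ha b hb hab => hT a (Finset.mem_of_mem_erase ha) b (Finset.mem_of_mem_erase hb) hab)
          d (fun L Ψ => ?_) q (Finset.mem_erase.mpr ⟨hqp, hq⟩)
        have hsum : ∑ p ∈ T.erase p₀, d p • ℬ.b p = ∑ p ∈ T, d p • ℬ.b p := by
          rw [← Finset.add_sum_erase T _ hp₀T, hdp₀, zero_smul, zero_add]
        rw [hsum]
        exact hd L Ψ
  -- now conclude injectivity from the claim
  obtain ⟨c, hc⟩ := (Submodule.mem_span_range_iff_exists_fun 𝕂).mp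
    (ℬ.b_span ▸ Submodule.mem_top : x ∈ Submodule.span 𝕂 (Set.range ℬ.b))
  -- conjugacy setoid and representative map
  let st : Setoid (Σ U : Subgroup G, (↥U →* A)) :=
    ⟨fun p q => ∃ g : G, pairConj g p = q, by
      constructor
      · intro p; exact ⟨1, pairConj_one p⟩
      · rintro p q ⟨g, rfl⟩
        exact ⟨g⁻¹, by rw [← pairConj_mul, inv_mul_cancel, pairConj_one]⟩
      · rintro p q w ⟨g, rfl⟩ ⟨g', rfl⟩
        exact ⟨g' * g, pairConj_mul g' g p⟩⟩
  let ρ : (Σ U : Subgroup G, (↥U →* A)) → (Σ U : Subgroup G, (↥U →* A)) :=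
    fun p => (Quotient.mk st p).out
  have hρ1 : ∀ p, ∃ g : G, pairConj g (ρ p) = p := by
    intro p
    have h := Quotient.exact (Quotient.out_eq (Quotient.mk st p))
    exact h
  have hρ2 : ∀ p, ∃ g : G, pairConj g p = ρ p := by
    intro p
    obtain ⟨g, hg⟩ := hρ1 p
    refine ⟨g⁻¹, ?_⟩
    conv_lhs => rw [← hg]
    rw [← pairConj_mul, inv_mul_cancel, pairConj_one]
  have hρconst : ∀ p q, (∃ g : G, pairConj g p = q) → ρ p = ρ q :=
    fun p q h => congrArg Quotient.out (Quotient.sound h)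
  have hρidem : ∀ p, ρ (ρ p) = ρ p := fun p => hρconst (ρ p) p (hρ1 p)
  have hρb : ∀ p, ℬ.b (ρ p) = ℬ.b p := by
    intro p
    obtain ⟨g, hg⟩ := hρ2 p
    rw [← hg, ℬ.b_conj]
  have hx2 : x = ∑ qT ∈ Finset.univ.image ρ,
      (∑ p ∈ Finset.univ.filter (fun p => ρ p = qT), c p) • ℬ.b qT := by
    rw [← hc]
    refine ((Finset.sum_fiberwise_of_maps_to (g := ρ)
      (fun p _ => Finset.mem_image_of_mem ρ (Finset.mem_univ p))
      (fun p => c p • ℬ.b p)).symm).trans ?_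
    refine Finset.sum_congr rfl fun qT _ => ?_
    rw [Finset.sum_smul]
    refine Finset.sum_congr rfl fun p hp => ?_
    have hpq : ρ p = qT := (Finset.mem_filter.mp hp).2
    rw [← hpq, hρb]
  have hTnc : ∀ p ∈ Finset.univ.image ρ, ∀ q ∈ Finset.univ.image ρ,
      (∃ g : G, pairConj g p = q) → p = q := by
    intro p hp q' hq' hconj
    obtain ⟨a, -, rfl⟩ := Finset.mem_image.mp hp
    obtain ⟨b', -, rfl⟩ := Finset.mem_image.mp hq'
    rw [← hρidem a, ← hρidem b']
    exact hρconst _ _ hconj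
  have hcoef := claim (Finset.univ.image ρ) hTnc
    (fun qT => ∑ p ∈ Finset.univ.filter (fun p => ρ p = qT), c p)
    (fun K Ψ => by
      have h := hx K Ψ
      rw [hx2] at h
      exact h)
  rw [hx2]
  refine Finset.sum_eq_zero fun qT hqT => ?_
  rw [show (∑ p ∈ Finset.univ.filter (fun p => ρ p = qT), c p) = 0 from hcoef qT hqT, zero_smul]

end Injectivity


section SpeciesComputation

variable {A G 𝕂 : Type*} [CommGroup A] [Group G] [Field 𝕂]

lemma map_conj_inv_le_iff {L K : Subgroup G} {g : G} :
    L.map ((MulAut.conj g⁻¹ : G ≃* G) : G →* G) ≤ K ↔ ∀ x ∈ L, g⁻¹ * x * g ∈ K := by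
  constructor
  · intro h x hx
    refine h (mem_map_conj_iff.mpr ?_)
    have h1 : (g⁻¹)⁻¹ * (g⁻¹ * x * g) * g⁻¹ = x := by group
    rw [h1]; exact hx
  · intro h y hy
    have h1 := mem_map_conj_iff.mp hy
    have h2 : g⁻¹ * ((g⁻¹)⁻¹ * y * g⁻¹) * g = y := by group
    have := h _ h1
    rwa [h2] at this

/-- The master per-`(K,φ,g)` term of the idempotent-species computation. -/
noncomputable def Wterm (L : Subgroup G) (Ψ : (↥L →* A) →* 𝕂ˣ) (H : Subgroup G) (Φ : (↥H →* A) →* 𝕂ˣ)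
    (μ : Subgroup G → Subgroup G → ℤ) (K : Subgroup G) (φ : ↥H →* A) (g : G) : 𝕂 :=
  if h : (∀ x ∈ L, g⁻¹ * x * g ∈ K) ∧ K ≤ H ∧
      (∀ ψ : ↥H →* A, (∀ x : ↥H, (x : G) ∈ K → ψ x = 1) → Φ ψ = 1) then
    (μ K H : 𝕂) * ((Φ φ⁻¹ : 𝕂ˣ) : 𝕂) *
      ((Ψ (resConj L K g h.1 (φ.comp (Subgroup.inclusion h.2.1))) : 𝕂ˣ) : 𝕂)
  else 0

lemma Wterm_def (L : Subgroup G) (Ψ : (↥L →* A) →* 𝕂ˣ) (H : Subgroup G) (Φ : (↥H →* A) →* 𝕂ˣ)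
    (μ : Subgroup G → Subgroup G → ℤ) (K : Subgroup G) (φ : ↥H →* A) (g : G) :
    Wterm L Ψ H Φ μ K φ g =
      if h : (∀ x ∈ L, g⁻¹ * x * g ∈ K) ∧ K ≤ H ∧
          (∀ ψ : ↥H →* A, (∀ x : ↥H, (x : G) ∈ K → ψ x = 1) → Φ ψ = 1) then
        (μ K H : 𝕂) * ((Φ φ⁻¹ : 𝕂ˣ) : 𝕂) *
          ((Ψ (resConj L K g h.1 (φ.comp (Subgroup.inclusion h.2.1))) : 𝕂ˣ) : 𝕂)
      else 0 := rfl

variable [Fintype G] {B : Type*} [Ring B] [Algebra 𝕂 B]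

lemma species_basis_term
    (ℬ : FiberedBurnsideData A G 𝕂 B)
    (s : ∀ K : Subgroup G, ((↥K →* A) →* 𝕂ˣ) → (B →ₗ[𝕂] 𝕂))
    (hs : ∀ (K : Subgroup G) (Ψ : (↥K →* A) →* 𝕂ˣ) (p : Σ U : Subgroup G, (↥U →* A))
      (R : Finset G), IsDCR K p.1 R →
      s K Ψ (ℬ.b p) = ∑ r ∈ R,
        (if h : K ≤ (pairConj r p).1 then
          ((Ψ ((pairConj r p).2.comp (Subgroup.inclusion h)) : 𝕂ˣ) : 𝕂) else 0))
    (L : Subgroup G) (Ψ : (↥L →* A) →* 𝕂ˣ) (H : Subgroup G) (Φ : (↥H →* A) →* 𝕂ˣ)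
    [Fintype (↥H →* A)]
    (μ : Subgroup G → Subgroup G → ℤ) (K : Subgroup G) (φ : ↥H →* A) :
    s L Ψ (if hK : K ≤ H ∧
        (∀ ψ : ↥H →* A, (∀ x : ↥H, (x : G) ∈ K → ψ x = 1) → Φ ψ = 1) then
      (((Nat.card ↥K : 𝕂) * (μ K H : 𝕂) * ((Φ φ⁻¹ : 𝕂ˣ) : 𝕂)) •
        ℬ.b ⟨K, φ.comp (Subgroup.inclusion hK.1)⟩)
      else 0) = ∑ g : G, Wterm L Ψ H Φ μ K φ g := by
  by_cases hK : K ≤ H ∧ (∀ ψ : ↥H →* A, (∀ x : ↥H, (x : G) ∈ K → ψ x = 1) → Φ ψ = 1)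
  · rw [dif_pos hK, map_smul, smul_eq_mul]
    obtain ⟨R, hR⟩ := exists_isDCR L K
    rw [hs L Ψ ⟨K, φ.comp (Subgroup.inclusion hK.1)⟩ R hR]
    -- the concrete coset function
    have hdite : ∀ r : G,
        (if h : L ≤ (pairConj r (⟨K, φ.comp (Subgroup.inclusion hK.1)⟩ :
            Σ U : Subgroup G, (↥U →* A))).1 then
          ((Ψ ((pairConj r (⟨K, φ.comp (Subgroup.inclusion hK.1)⟩ :
            Σ U : Subgroup G, (↥U →* A))).2.comp (Subgroup.inclusion h)) : 𝕂ˣ) : 𝕂) else 0) =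
        (if hg : ∀ x ∈ L, r⁻¹ * x * r ∈ K then
          ((Ψ (resConj L K r hg (φ.comp (Subgroup.inclusion hK.1))) : 𝕂ˣ) : 𝕂) else 0) := by
      intro r
      by_cases hle : L ≤ (pairConj (A := A) r
          ⟨K, φ.comp (Subgroup.inclusion hK.1)⟩).1
      · rw [dif_pos hle, dif_pos (fun x hx => mem_map_conj_iff.mp (hle hx)),
          pairConj_comp_inclusion_eq]
      · rw [dif_neg hle, dif_neg (fun hc => hle (fun {x} hx => mem_map_conj_iff.mpr (hc x hx)))]
    rw [Finset.sum_congr rfl fun r _ => hdite r]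
    -- properties of F
    have hFinv : ∀ g : G, ∀ l ∈ L, ∀ k ∈ K,
        (if hg : ∀ x ∈ L, (l*g*k)⁻¹ * x * (l*g*k) ∈ K then
          ((Ψ (resConj L K (l*g*k) hg (φ.comp (Subgroup.inclusion hK.1))) : 𝕂ˣ) : 𝕂) else 0) =
        (if hg : ∀ x ∈ L, g⁻¹ * x * g ∈ K then
          ((Ψ (resConj L K g hg (φ.comp (Subgroup.inclusion hK.1))) : 𝕂ˣ) : 𝕂) else 0) := by
      intro g l hl k hk
      by_cases hg : ∀ x ∈ L, g⁻¹ * x * g ∈ K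
      · have hg' : ∀ x ∈ L, (l*g*k)⁻¹ * x * (l*g*k) ∈ K := by
          intro x hx
          have h1 : (l*g*k)⁻¹ * x * (l*g*k) = k⁻¹ * (g⁻¹ * (l⁻¹ * x * l) * g) * k := by group
          rw [h1]
          exact mul_mem (mul_mem (inv_mem hk)
            (hg _ (mul_mem (mul_mem (inv_mem hl) hx) hl))) hk
        rw [dif_pos hg', dif_pos hg]
        refine congrArg (fun u : 𝕂ˣ => (u : 𝕂)) (congrArg Ψ (MonoidHom.ext fun x => ?_))
        have hx1 : l⁻¹ * ↑x * l ∈ L := mul_mem (mul_mem (inv_mem hl) x.2) hl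
        have hy : g⁻¹ * (l⁻¹ * ↑x * l) * g ∈ K := hg _ hx1
        have hyk : k⁻¹ * (g⁻¹ * (l⁻¹ * ↑x * l) * g) * k ∈ K :=
          mul_mem (mul_mem (inv_mem hk) hy) hk
        calc resConj L K (l*g*k) hg' (φ.comp (Subgroup.inclusion hK.1)) x
            = (φ.comp (Subgroup.inclusion hK.1))
                ⟨(l*g*k)⁻¹ * ↑x * (l*g*k), hg' ↑x x.2⟩ := rfl
          _ = (φ.comp (Subgroup.inclusion hK.1))
                ⟨k⁻¹ * (g⁻¹ * (l⁻¹ * ↑x * l) * g) * k, hyk⟩ :=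
              congrArg _ (Subtype.ext (by group))
          _ = (φ.comp (Subgroup.inclusion hK.1)) ⟨g⁻¹ * (l⁻¹ * ↑x * l) * g, hy⟩ :=
              conj_eval _ hy hk hyk
          _ = resConj L K g hg (φ.comp (Subgroup.inclusion hK.1)) ⟨l⁻¹ * ↑x * l, hx1⟩ := rfl
          _ = resConj L K g hg (φ.comp (Subgroup.inclusion hK.1)) x :=
              conj_eval _ x.2 hl hx1
      · have hg' : ¬ ∀ x ∈ L, (l*g*k)⁻¹ * x * (l*g*k) ∈ K := by
          intro hc
          refine hg (fun x hx => ?_)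
          have h2 := hc (l * x * l⁻¹) (mul_mem (mul_mem hl hx) (inv_mem hl))
          have h3 : (l*g*k)⁻¹ * (l * x * l⁻¹) * (l*g*k) = k⁻¹ * (g⁻¹ * x * g) * k := by group
          rw [h3] at h2
          have h4 : g⁻¹ * x * g = k * (k⁻¹ * (g⁻¹ * x * g) * k) * k⁻¹ := by group
          rw [h4]
          exact mul_mem (mul_mem hk h2) (inv_mem hk)
        rw [dif_neg hg', dif_neg hg]
    have hFvan : ∀ g : G,
        (if hg : ∀ x ∈ L, g⁻¹ * x * g ∈ K then
          ((Ψ (resConj L K g hg (φ.comp (Subgroup.inclusion hK.1))) : 𝕂ˣ) : 𝕂) else 0) ≠ 0 →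
        ∀ x ∈ L, g⁻¹ * x * g ∈ K := by
      intro g hne
      by_cases hg : ∀ x ∈ L, g⁻¹ * x * g ∈ K
      · exact hg
      · exact absurd (dif_neg hg) hne
    have hsum := dcr_sum hR _ hFinv hFvan
    -- conclude
    have hWg : ∀ g : G, Wterm L Ψ H Φ μ K φ g =
        (μ K H : 𝕂) * ((Φ φ⁻¹ : 𝕂ˣ) : 𝕂) *
        (if hg : ∀ x ∈ L, g⁻¹ * x * g ∈ K then
          ((Ψ (resConj L K g hg (φ.comp (Subgroup.inclusion hK.1))) : 𝕂ˣ) : 𝕂) else 0) := by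
      intro g
      rw [Wterm_def]
      by_cases hg : ∀ x ∈ L, g⁻¹ * x * g ∈ K
      · rw [dif_pos ⟨hg, hK⟩, dif_pos hg]
      · rw [dif_neg (fun hc => hg hc.1), dif_neg hg, mul_zero]
    rw [Finset.sum_congr rfl fun g _ => hWg g]
    rw [← Finset.mul_sum, hsum]
    ring
  · rw [dif_neg hK, map_zero]
    refine (Finset.sum_eq_zero fun g _ => ?_).symm
    rw [Wterm_def, dif_neg (fun hc => hK hc.2)]

end SpeciesComputation


section InnerSum

variable {A G 𝕂 : Type*} [CommGroup A] [Group G] [Field 𝕂]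

lemma Wterm_inner_sum [Fintype (Subgroup G)]
    (L : Subgroup G) (Ψ : (↥L →* A) →* 𝕂ˣ) (H : Subgroup G) (Φ : (↥H →* A) →* 𝕂ˣ)
    [Fintype (↥H →* A)]
    (μ : Subgroup G → Subgroup G → ℤ)
    (hμ : ∀ K L' : Subgroup G, K ≤ L' →
      (∑ M : Subgroup G, if K ≤ M ∧ M ≤ L' then μ M L' else 0) = if K = L' then 1 else 0)
    (g : G) :
    ∑ K : Subgroup G, ∑ φ : ↥H →* A, Wterm L Ψ H Φ μ K φ g =
      (Fintype.card (↥H →* A) : 𝕂) *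
        (if charPairConj g (⟨H, Φ⟩ : Σ K : Subgroup G, ((↥K →* A) →* 𝕂ˣ)) = ⟨L, Ψ⟩
          then 1 else 0) := by
  by_cases hgH : ∀ x ∈ L, g⁻¹ * x * g ∈ H
  · set Ξ : (↥H →* A) →* 𝕂ˣ := Ψ.comp (resConj L H g hgH) with hΞdef
    have hWval : ∀ (K : Subgroup G)
        (hc : (∀ x ∈ L, g⁻¹ * x * g ∈ K) ∧ K ≤ H ∧
          (∀ ψ : ↥H →* A, (∀ x : ↥H, (x : G) ∈ K → ψ x = 1) → Φ ψ = 1)) (φ : ↥H →* A),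
        Wterm L Ψ H Φ μ K φ g =
          (μ K H : 𝕂) * ((Φ φ⁻¹ : 𝕂ˣ) : 𝕂) * ((Ξ φ : 𝕂ˣ) : 𝕂) := by
      intro K hc φ
      rw [Wterm_def, dif_pos hc]
      have hval : Ψ (resConj L K g hc.1 (φ.comp (Subgroup.inclusion hc.2.1))) = Ξ φ :=
        congrArg Ψ (MonoidHom.ext fun x => congrArg φ (Subtype.ext rfl))
      rw [hval]
    have hφsum : ∑ φ : ↥H →* A, ((Φ φ⁻¹ : 𝕂ˣ) : 𝕂) * ((Ξ φ : 𝕂ˣ) : 𝕂) =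
        if Φ = Ξ then (Fintype.card (↥H →* A) : 𝕂) else 0 := by
      have h1 : ∀ φ : ↥H →* A, ((Φ φ⁻¹ : 𝕂ˣ) : 𝕂) * ((Ξ φ : 𝕂ˣ) : 𝕂) =
          (((Φ⁻¹ * Ξ) φ : 𝕂ˣ) : 𝕂) := by
        intro φ
        rw [map_inv, MonoidHom.mul_apply, MonoidHom.inv_apply, Units.val_mul]
      rw [Finset.sum_congr rfl fun φ _ => h1 φ, char_sum_eq (Φ⁻¹ * Ξ)]
      by_cases h2 : Φ = Ξ
      · rw [if_pos (inv_mul_eq_one.mpr h2), if_pos h2]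
      · rw [if_neg (fun hc => h2 (inv_mul_eq_one.mp hc)), if_neg h2]
    by_cases hΞΦ : Φ = Ξ
    · have hLg : L.map ((MulAut.conj g⁻¹ : G ≃* G) : G →* G) ≤ H := map_conj_inv_le_iff.mpr hgH
      have hcond : ∀ K : Subgroup G,
          ((∀ x ∈ L, g⁻¹ * x * g ∈ K) ∧ K ≤ H ∧
            (∀ ψ : ↥H →* A, (∀ x : ↥H, (x : G) ∈ K → ψ x = 1) → Φ ψ = 1)) ↔
          (L.map ((MulAut.conj g⁻¹ : G ≃* G) : G →* G) ≤ K ∧ K ≤ H) := by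
        intro K
        constructor
        · rintro ⟨h1, h2, -⟩
          exact ⟨map_conj_inv_le_iff.mpr h1, h2⟩
        · rintro ⟨h1, h2⟩
          refine ⟨map_conj_inv_le_iff.mp h1, h2, fun ψ hψ => ?_⟩
          rw [hΞΦ]
          show Ψ (resConj L H g hgH ψ) = 1
          have hres : resConj L H g hgH ψ = 1 := MonoidHom.ext fun x => by
            show ψ ⟨g⁻¹ * ↑x * g, hgH ↑x x.2⟩ = (1 : ↥L →* A) x
            exact (hψ ⟨g⁻¹ * ↑x * g, hgH ↑x x.2⟩ (map_conj_inv_le_iff.mp h1 ↑x x.2)).trans rfl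
          rw [hres, map_one]
      have hKsum : ∀ K : Subgroup G, ∑ φ : ↥H →* A, Wterm L Ψ H Φ μ K φ g =
          if (L.map ((MulAut.conj g⁻¹ : G ≃* G) : G →* G) ≤ K ∧ K ≤ H) then
            (μ K H : 𝕂) * (Fintype.card (↥H →* A) : 𝕂) else 0 := by
        intro K
        by_cases hc : (∀ x ∈ L, g⁻¹ * x * g ∈ K) ∧ K ≤ H ∧
            (∀ ψ : ↥H →* A, (∀ x : ↥H, (x : G) ∈ K → ψ x = 1) → Φ ψ = 1)
        · rw [if_pos ((hcond K).mp hc)]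
          rw [Finset.sum_congr rfl fun φ _ => hWval K hc φ]
          rw [show (∑ φ : ↥H →* A, (μ K H : 𝕂) * ((Φ φ⁻¹ : 𝕂ˣ) : 𝕂) * ((Ξ φ : 𝕂ˣ) : 𝕂)) =
              (μ K H : 𝕂) * ∑ φ : ↥H →* A, ((Φ φ⁻¹ : 𝕂ˣ) : 𝕂) * ((Ξ φ : 𝕂ˣ) : 𝕂) from by
            rw [Finset.mul_sum]
            exact Finset.sum_congr rfl fun φ _ => by ring]
          rw [hφsum, if_pos hΞΦ]
        · rw [if_neg (fun h2 => hc ((hcond K).mpr h2))]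
          exact Finset.sum_eq_zero fun φ _ => by rw [Wterm_def]; exact dif_neg hc
      rw [Finset.sum_congr rfl fun K _ => hKsum K]
      have hμ' := hμ (L.map ((MulAut.conj g⁻¹ : G ≃* G) : G →* G)) H hLg
      have hcast : ∑ K : Subgroup G,
          (if (L.map ((MulAut.conj g⁻¹ : G ≃* G) : G →* G) ≤ K ∧ K ≤ H) then
            (μ K H : 𝕂) * (Fintype.card (↥H →* A) : 𝕂) else 0) =
          (Fintype.card (↥H →* A) : 𝕂) *
            ((∑ M : Subgroup G, if L.map ((MulAut.conj g⁻¹ : G ≃* G) : G →* G) ≤ M ∧ M ≤ H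
              then μ M H else 0 : ℤ) : 𝕂) := by
        rw [Int.cast_sum, Finset.mul_sum]
        refine Finset.sum_congr rfl fun K _ => ?_
        by_cases h3 : L.map ((MulAut.conj g⁻¹ : G ≃* G) : G →* G) ≤ K ∧ K ≤ H
        · rw [if_pos h3, if_pos h3]
          ring
        · rw [if_neg h3, if_neg h3, Int.cast_zero, mul_zero]
      rw [hcast, hμ']
      congr 1
      have hiff2 : (L.map ((MulAut.conj g⁻¹ : G ≃* G) : G →* G) = H) ↔
          (charPairConj g (⟨H, Φ⟩ : Σ K : Subgroup G, ((↥K →* A) →* 𝕂ˣ)) = ⟨L, Ψ⟩) := by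
        constructor
        · intro hLH
          have hmapL : H.map ((MulAut.conj g : G ≃* G) : G →* G) = L := by
            rw [← hLH, ← map_conj_mul, mul_inv_cancel, map_conj_one]
          rw [charPairConj_eq_iff Φ Ψ g hmapL hgH]
          intro φ
          rw [hΞΦ]
          rfl
        · intro hP
          have h1 : H.map ((MulAut.conj g : G ≃* G) : G →* G) = L := congrArg Sigma.fst hP
          rw [← h1, ← map_conj_mul, inv_mul_cancel, map_conj_one]
      by_cases h4 : L.map ((MulAut.conj g⁻¹ : G ≃* G) : G →* G) = H
      · rw [if_pos h4, if_pos (hiff2.mp h4), Int.cast_one]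
      · rw [if_neg h4, if_neg (fun hc => h4 (hiff2.mpr hc)), Int.cast_zero]
    · have hP : ¬ (charPairConj g (⟨H, Φ⟩ : Σ K : Subgroup G, ((↥K →* A) →* 𝕂ˣ)) = ⟨L, Ψ⟩) := by
        intro hP
        have h1 : H.map ((MulAut.conj g : G ≃* G) : G →* G) = L := congrArg Sigma.fst hP
        have h2 := (charPairConj_eq_iff Φ Ψ g h1 hgH).mp hP
        exact hΞΦ (MonoidHom.ext fun φ => h2 φ)
      rw [if_neg hP, mul_zero]
      refine Finset.sum_eq_zero fun K _ => ?_
      by_cases hc : (∀ x ∈ L, g⁻¹ * x * g ∈ K) ∧ K ≤ H ∧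
          (∀ ψ : ↥H →* A, (∀ x : ↥H, (x : G) ∈ K → ψ x = 1) → Φ ψ = 1)
      · rw [Finset.sum_congr rfl fun φ _ => hWval K hc φ]
        rw [show (∑ φ : ↥H →* A, (μ K H : 𝕂) * ((Φ φ⁻¹ : 𝕂ˣ) : 𝕂) * ((Ξ φ : 𝕂ˣ) : 𝕂)) =
            (μ K H : 𝕂) * ∑ φ : ↥H →* A, ((Φ φ⁻¹ : 𝕂ˣ) : 𝕂) * ((Ξ φ : 𝕂ˣ) : 𝕂) from by
          rw [Finset.mul_sum]
          exact Finset.sum_congr rfl fun φ _ => by ring]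
        rw [hφsum, if_neg hΞΦ, mul_zero]
      · exact Finset.sum_eq_zero fun φ _ => by rw [Wterm_def]; exact dif_neg hc
  · have hP : ¬ (charPairConj g (⟨H, Φ⟩ : Σ K : Subgroup G, ((↥K →* A) →* 𝕂ˣ)) = ⟨L, Ψ⟩) := by
      intro hP
      have h1 : H.map ((MulAut.conj g : G ≃* G) : G →* G) = L := congrArg Sigma.fst hP
      refine hgH fun x hx => ?_
      rw [← h1] at hx
      exact mem_map_conj_iff.mp hx
    rw [if_neg hP, mul_zero]
    refine Finset.sum_eq_zero fun K _ => Finset.sum_eq_zero fun φ _ => ?_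
    rw [Wterm_def]
    exact dif_neg (fun hc => hgH (fun x hx => hc.2.1 (hc.1 x hx)))

end InnerSum


theorem stmt_14 {A G 𝕂 B : Type*} [CommGroup A] [Group G] [Fintype G]
    [Fintype (Subgroup G)] [Field 𝕂] [CharZero 𝕂] [Ring B] [Algebra 𝕂 B]
    (hfin : ∀ K : Subgroup G, Finite (↥K →* A))
    (hsplit : ∀ K : Subgroup G, ∃ ζ : 𝕂, IsPrimitiveRoot ζ (Monoid.exponent (↥K →* A)))
    (ℬ : FiberedBurnsideData A G 𝕂 B)
    -- the species homomorphisms s^G_{(K,Ψ)} = s_Ψ ∘ π_K ∘ res^G_K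
    (s : ∀ K : Subgroup G, ((↥K →* A) →* 𝕂ˣ) → (B →ₗ[𝕂] 𝕂))
    (hs : ∀ (K : Subgroup G) (Ψ : (↥K →* A) →* 𝕂ˣ) (p : Σ U : Subgroup G, (↥U →* A))
      (R : Finset G), IsDCR K p.1 R →
      s K Ψ (ℬ.b p) = ∑ r ∈ R,
        (if h : K ≤ (pairConj r p).1 then
          ((Ψ ((pairConj r p).2.comp (Subgroup.inclusion h)) : 𝕂ˣ) : 𝕂) else 0))
    -- the Möbius function of the subgroup lattice of G
    (μ : Subgroup G → Subgroup G → ℤ)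
    (hμ : ∀ K L : Subgroup G, K ≤ L →
      (∑ M : Subgroup G, if K ≤ M ∧ M ≤ L then μ M L else 0) = if K = L then 1 else 0)
    -- the pair (H,Φ) and its primitive idempotent e = e^G_{(H,Φ)}, characterized by
    -- its species values: 1 on the conjugates of (H,Φ) and 0 elsewhere
    (H : Subgroup G) (Φ : (↥H →* A) →* 𝕂ˣ) [Fintype (↥H →* A)]
    (e : B)
    (he : ∀ (K : Subgroup G) (Ψ : (↥K →* A) →* 𝕂ˣ),
      s K Ψ e = if ∃ g : G, charPairConj g (⟨H, Φ⟩ : Σ K : Subgroup G, ((↥K →* A) →* 𝕂ˣ))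
        = ⟨K, Ψ⟩ then 1 else 0) :
    e = ((Nat.card {g : G // charPairConj g (⟨H, Φ⟩ : Σ K : Subgroup G, ((↥K →* A) →* 𝕂ˣ))
            = ⟨H, Φ⟩} : 𝕂) * (Nat.card (↥H →* A) : 𝕂))⁻¹ •
        ∑ K : Subgroup G, ∑ φ : ↥H →* A,
          if hK : K ≤ H ∧ (∀ ψ : ↥H →* A, (∀ x : ↥H, (x : G) ∈ K → ψ x = 1) → Φ ψ = 1) then
            (((Nat.card ↥K : 𝕂) * (μ K H : 𝕂) * ((Φ φ⁻¹ : 𝕂ˣ) : 𝕂)) •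
              ℬ.b ⟨K, φ.comp (Subgroup.inclusion hK.1)⟩)
          else 0 := by
  classical
  haveI : ∀ U : Subgroup G, Finite (↥U →* A) := hfin
  have key : ∀ (L : Subgroup G) (Ψ : (↥L →* A) →* 𝕂ˣ),
      s L Ψ (((Nat.card {g : G // charPairConj g
            (⟨H, Φ⟩ : Σ K : Subgroup G, ((↥K →* A) →* 𝕂ˣ)) = ⟨H, Φ⟩} : 𝕂) *
          (Nat.card (↥H →* A) : 𝕂))⁻¹ •
        ∑ K : Subgroup G, ∑ φ : ↥H →* A,
          if hK : K ≤ H ∧ (∀ ψ : ↥H →* A, (∀ x : ↥H, (x : G) ∈ K → ψ x = 1) → Φ ψ = 1) then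
            (((Nat.card ↥K : 𝕂) * (μ K H : 𝕂) * ((Φ φ⁻¹ : 𝕂ˣ) : 𝕂)) •
              ℬ.b ⟨K, φ.comp (Subgroup.inclusion hK.1)⟩)
          else 0) =
      if ∃ g : G, charPairConj g (⟨H, Φ⟩ : Σ K : Subgroup G, ((↥K →* A) →* 𝕂ˣ)) = ⟨L, Ψ⟩
        then 1 else 0 := by
    intro L Ψ
    rw [map_smul, smul_eq_mul]
    have h1 : (s L Ψ) (∑ K : Subgroup G, ∑ φ : ↥H →* A,
        if hK : K ≤ H ∧ (∀ ψ : ↥H →* A, (∀ x : ↥H, (x : G) ∈ K → ψ x = 1) → Φ ψ = 1) then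
          (((Nat.card ↥K : 𝕂) * (μ K H : 𝕂) * ((Φ φ⁻¹ : 𝕂ˣ) : 𝕂)) •
            ℬ.b ⟨K, φ.comp (Subgroup.inclusion hK.1)⟩)
        else 0) = ∑ K : Subgroup G, ∑ φ : ↥H →* A, ∑ g : G, Wterm L Ψ H Φ μ K φ g := by
      rw [map_sum]
      refine Finset.sum_congr rfl fun K _ => ?_
      rw [map_sum]
      refine Finset.sum_congr rfl fun φ _ => ?_
      exact species_basis_term ℬ s hs L Ψ H Φ μ K φ
    rw [h1]
    have hswap : (∑ K : Subgroup G, ∑ φ : ↥H →* A, ∑ g : G, Wterm L Ψ H Φ μ K φ g) =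
        ∑ g : G, ∑ K : Subgroup G, ∑ φ : ↥H →* A, Wterm L Ψ H Φ μ K φ g := by
      rw [Finset.sum_congr rfl fun K _ => Finset.sum_comm]
      exact Finset.sum_comm
    rw [hswap]
    rw [Finset.sum_congr rfl fun g _ => Wterm_inner_sum L Ψ H Φ μ hμ g]
    rw [← Finset.mul_sum]
    by_cases hex : ∃ g : G, charPairConj g
        (⟨H, Φ⟩ : Σ K : Subgroup G, ((↥K →* A) →* 𝕂ˣ)) = ⟨L, Ψ⟩
    · rw [if_pos hex]
      obtain ⟨g₀, hg₀⟩ := hex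
      haveI : Nonempty {g : G // charPairConj g
          (⟨H, Φ⟩ : Σ K : Subgroup G, ((↥K →* A) →* 𝕂ˣ)) = ⟨H, Φ⟩} :=
        ⟨⟨1, charPairConj_one _⟩⟩
      have hcount : (∑ g : G, if charPairConj g
            (⟨H, Φ⟩ : Σ K : Subgroup G, ((↥K →* A) →* 𝕂ˣ)) = ⟨L, Ψ⟩ then (1:𝕂) else 0) =
          (Nat.card {g : G // charPairConj g
            (⟨H, Φ⟩ : Σ K : Subgroup G, ((↥K →* A) →* 𝕂ˣ)) = ⟨H, Φ⟩} : 𝕂) := by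
        rw [Finset.sum_boole]
        congr 1
        have e2 : {g : G // charPairConj g
              (⟨H, Φ⟩ : Σ K : Subgroup G, ((↥K →* A) →* 𝕂ˣ)) = ⟨L, Ψ⟩} ≃
            {g : G // charPairConj g
              (⟨H, Φ⟩ : Σ K : Subgroup G, ((↥K →* A) →* 𝕂ˣ)) = ⟨H, Φ⟩} :=
          { toFun := fun x => ⟨g₀⁻¹ * x.1, by
              rw [charPairConj_mul, x.2, ← hg₀, ← charPairConj_mul, inv_mul_cancel,
                charPairConj_one]⟩
            invFun := fun y => ⟨g₀ * y.1, by rw [charPairConj_mul, y.2, hg₀]⟩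
            left_inv := fun x => Subtype.ext (by group)
            right_inv := fun y => Subtype.ext (by group) }
        rw [← Fintype.card_subtype, Nat.card_eq_fintype_card]
        exact Fintype.card_congr e2
      rw [hcount]
      have hN : ((Nat.card {g : G // charPairConj g
          (⟨H, Φ⟩ : Σ K : Subgroup G, ((↥K →* A) →* 𝕂ˣ)) = ⟨H, Φ⟩} : 𝕂)) ≠ 0 :=
        Nat.cast_ne_zero.mpr Nat.card_pos.ne'
      haveI : Nonempty (↥H →* A) := ⟨1⟩
      have hm : ((Nat.card (↥H →* A) : 𝕂)) ≠ 0 := Nat.cast_ne_zero.mpr Nat.card_pos.ne'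
      rw [← Nat.card_eq_fintype_card, inv_mul_eq_one₀ (mul_ne_zero hN hm)]
      exact mul_comm _ _
    · rw [if_neg hex]
      rw [Finset.sum_congr rfl fun g _ => if_neg (fun hc => hex ⟨g, hc⟩)]
      rw [Finset.sum_const_zero, mul_zero, mul_zero]
  rw [← sub_eq_zero]
  refine species_injective hfin hsplit ℬ s hs _ (fun L Ψ => ?_)
  rw [map_sub, he L Ψ, key L Ψ, sub_self]
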